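/- Let G be a 3-regular simple graph with an edge labeling x : E(G) → ℕ taking positive values, and let G' = gadget(G, x). For any two vertices u and v of G at graph distance d in G, the corresponding original vertices u' and v' of G' satisfy gdist(u', v') = d. -/

import Mathlib

open scoped ENNReal

namespace LCLGadget

/-- Adjacency relation (one direction) of the A-gadget, on vertex indices `0,…,5`
representing the paper's vertices `1,…,6`. -/
def AAdj (i j : Fin 6) : Prop :=
  (i, j) ∈ ([(0,1),(0,2),(1,2),(1,3),(2,4),(3,4),(3,5),(4,5)] : List (Fin 6 × Fin 6))

variable {V : Type} [LinearOrder V]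

/-- The gadget vertices of the gadgeted graph `gadget(G, x)`: a vertex `⟨(a,b,i,j), _⟩`
is vertex `j` of the `i`-th A-gadget on the expanded edge replacing the edge `{a,b}`
(oriented so that `a < b`). -/
abbrev GadgetAux (G : SimpleGraph V) (x : Sym2 V → ℕ) : Type :=
  {p : V × V × ℕ × Fin 6 //
    p.1 < p.2.1 ∧ G.Adj p.1 p.2.1 ∧ p.2.2.1 < x s(p.1, p.2.1)}

/-- Vertices of the gadgeted graph: original vertices (`Sum.inl`) and gadget
vertices (`Sum.inr`). -/
abbrev GadgetVert (G : SimpleGraph V) (x : Sym2 V → ℕ) : Type :=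
  V ⊕ GadgetAux G x

/-- Base adjacency relation of the gadgeted graph (to be symmetrized):
vertex `0` (paper's `1`) of the first gadget is joined to the smaller endpoint,
vertex `5` (paper's `6`) of the last gadget is joined to the larger endpoint,
within one gadget the A-gadget edges are used, and consecutive gadgets of a chain
are joined by an edge from vertex `5` to vertex `0`. -/
def gadgetRel (G : SimpleGraph V) (x : Sym2 V → ℕ) :
    GadgetVert G x → GadgetVert G x → Prop
  | Sum.inl sv, Sum.inr ⟨⟨a, b, i, j⟩, _⟩ =>
      (sv = a ∧ i = 0 ∧ j = 0) ∨ (sv = b ∧ i = x s(a, b) - 1 ∧ j = 5)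
  | Sum.inr ⟨⟨a, b, i, j⟩, _⟩, Sum.inr ⟨⟨a', b', i', j'⟩, _⟩ =>
      a = a' ∧ b = b' ∧ ((i = i' ∧ AAdj j j') ∨ (i' = i + 1 ∧ j = 5 ∧ j' = 0))
  | _, _ => False

/-- The gadgeted graph `G' = gadget(G, x)`. -/
def gadgetGraph (G : SimpleGraph V) (x : Sym2 V → ℕ) : SimpleGraph (GadgetVert G x) :=
  SimpleGraph.fromRel (gadgetRel G x)

/-- Weight of a (potential) edge of the gadgeted graph: `1/2` if it is incident to an
original vertex, `0` otherwise. -/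
noncomputable def wt (G : SimpleGraph V) (x : Sym2 V → ℕ) :
    GadgetVert G x → GadgetVert G x → ℝ≥0∞
  | Sum.inl _, _ => 1/2
  | _, Sum.inl _ => 1/2
  | _, _ => 0

/-- The gadgeted distance `gdist(u,v)`: the minimum total weight of a path
from `u` to `v` in the gadgeted graph. -/
noncomputable def gdist (G : SimpleGraph V) (x : Sym2 V → ℕ) (u v : GadgetVert G x) : ℝ≥0∞ :=
  ⨅ p : (gadgetGraph G x).Walk u v,
    (p.darts.map fun d => wt G x d.toProd.1 d.toProd.2).sum

/-- Membership of a vertex `u` in the `r`-gball around `c`. -/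
def inGball (G : SimpleGraph V) (x : Sym2 V → ℕ) (r : ℕ) (c u : GadgetVert G x) : Prop :=
  gdist G x c u ≤ (r : ℝ≥0∞)

/-- `u` is an original vertex of the gadgeted graph. -/
def IsOriginal (G : SimpleGraph V) (x : Sym2 V → ℕ) (u : GadgetVert G x) : Prop :=
  ∃ v : V, u = Sum.inl v

/-- `u` is an outer vertex: a gadget vertex adjacent to an original vertex. -/
def IsOuter (G : SimpleGraph V) (x : Sym2 V → ℕ) (u : GadgetVert G x) : Prop :=
  (∃ p, u = Sum.inr p) ∧ ∃ w, IsOriginal G x w ∧ (gadgetGraph G x).Adj u w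

/-- `u` is an inner vertex: a gadget vertex not adjacent to any original vertex. -/
def IsInner (G : SimpleGraph V) (x : Sym2 V → ℕ) (u : GadgetVert G x) : Prop :=
  (∃ p, u = Sum.inr p) ∧ ¬ ∃ w, IsOriginal G x w ∧ (gadgetGraph G x).Adj u w

/-- `G` is a 3-regular graph. -/
def ThreeRegular (G : SimpleGraph V) : Prop :=
  ∀ v : V, (G.neighborSet v).ncard = 3

/-- The edge labeling `x` takes positive values on all edges. -/
def PosLabels (G : SimpleGraph V) (x : Sym2 V → ℕ) : Prop :=
  ∀ e ∈ G.edgeSet, 0 < x e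

/-- `x` is a distance-`2r` edge coloring of `G`: any two distinct edges of `G` at
distance at most `2r` from each other receive distinct labels. -/
def DistEdgeColoring (G : SimpleGraph V) (x : Sym2 V → ℕ) (r : ℕ) : Prop :=
  ∀ e ∈ G.edgeSet, ∀ f ∈ G.edgeSet, e ≠ f →
    (∃ a ∈ e, ∃ b ∈ f, G.edist a b ≤ (2 * r : ℕ)) → x e ≠ x f

/-- The gadgeted graph `gadget(G,x)` is correctly gadgeted for parameter `r`. -/
def CorrectlyGadgeted (G : SimpleGraph V) (x : Sym2 V → ℕ) (r : ℕ) : Prop :=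
  ThreeRegular G ∧ PosLabels G x ∧ DistEdgeColoring G x r

/-- `χ` is a distance-2 coloring of the gadgeted graph:
it is injective on `{v} ∪ N(v)` for every vertex `v`. -/
def Dist2Coloring (G : SimpleGraph V) (x : Sym2 V → ℕ) (χ : GadgetVert G x → ℕ) : Prop :=
  ∀ v : GadgetVert G x, Set.InjOn χ (insert v ((gadgetGraph G x).neighborSet v))

/-- `χ` is edge-consistent in every `r`-gball: whenever `{v,u}` is an edge and
`v' ∈ gball_r(v)` has `χ(v') = χ(v)`, there is a neighbor `u'` of `v'` with
`χ(u') = χ(u)`. -/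
def EdgeConsistent (G : SimpleGraph V) (x : Sym2 V → ℕ) (r : ℕ)
    (χ : GadgetVert G x → ℕ) : Prop :=
  ∀ v u : GadgetVert G x, (gadgetGraph G x).Adj v u →
    ∀ v', inGball G x r v v' → χ v' = χ v →
      ∃ u', (gadgetGraph G x).Adj v' u' ∧ χ u' = χ u

/-- `u` lies on a triangle (cycle of length 3) of the gadgeted graph. -/
def OnTriangle (G : SimpleGraph V) (x : Sym2 V → ℕ) (u : GadgetVert G x) : Prop :=
  ∃ a b, (gadgetGraph G x).Adj u a ∧ (gadgetGraph G x).Adj u b ∧ (gadgetGraph G x).Adj a b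

end LCLGadget

namespace LCLGadgetAux
open LCLGadget

variable {V : Type} [LinearOrder V] {G : SimpleGraph V} {x : Sym2 V → ℕ}

noncomputable def wsum {u v : GadgetVert G x} (p : (gadgetGraph G x).Walk u v) : ℝ≥0∞ :=
  (p.darts.map fun d => wt G x d.toProd.1 d.toProd.2).sum

lemma wt_symm (u v : GadgetVert G x) : wt G x u v = wt G x v u := by
  cases u <;> cases v <;> rfl

lemma wsum_nil {u : GadgetVert G x} : wsum (SimpleGraph.Walk.nil : (gadgetGraph G x).Walk u u) = 0 := rfl

lemma wsum_cons {u v w : GadgetVert G x} (h : (gadgetGraph G x).Adj u v)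
    (p : (gadgetGraph G x).Walk v w) :
    wsum (SimpleGraph.Walk.cons h p) = wt G x u v + wsum p := by
  simp [wsum]

lemma wsum_append {u v w : GadgetVert G x} (p : (gadgetGraph G x).Walk u v)
    (q : (gadgetGraph G x).Walk v w) :
    wsum (p.append q) = wsum p + wsum q := by
  simp [wsum, SimpleGraph.Walk.darts_append]

lemma wsum_reverse {u v : GadgetVert G x} (p : (gadgetGraph G x).Walk u v) :
    wsum p.reverse = wsum p := by
  simp only [wsum, SimpleGraph.Walk.darts_reverse, List.map_reverse, List.sum_reverse,
    List.map_map]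
  congr 1
  refine List.map_congr_left fun d _ => ?_
  simp [SimpleGraph.Dart.symm, wt_symm]

lemma gdist_le {u v : GadgetVert G x} (p : (gadgetGraph G x).Walk u v) :
    gdist G x u v ≤ wsum p := iInf_le _ p

lemma le_gdist {u v : GadgetVert G x} {c : ℝ≥0∞}
    (h : ∀ p : (gadgetGraph G x).Walk u v, c ≤ wsum p) : c ≤ gdist G x u v := le_iInf h

end LCLGadgetAux

namespace LCLGadgetAux
open LCLGadget SimpleGraph
set_option linter.unusedSectionVars false
variable {V : Type} [LinearOrder V] {G : SimpleGraph V} {x : Sym2 V → ℕ}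

lemma adj_of_rel {u v : GadgetVert G x} (hne : u ≠ v) (h : gadgetRel G x u v) :
    (gadgetGraph G x).Adj u v :=
  (SimpleGraph.fromRel_adj _ _ _).2 ⟨hne, Or.inl h⟩

lemma adj_of_rel' {u v : GadgetVert G x} (hne : u ≠ v) (h : gadgetRel G x v u) :
    (gadgetGraph G x).Adj u v :=
  (SimpleGraph.fromRel_adj _ _ _).2 ⟨hne, Or.inr h⟩

lemma inr_ne {a b : V} {i i' : ℕ} {j j' : Fin 6} {h1 h2}
    (hne : i ≠ i' ∨ j ≠ j') :
    (Sum.inr ⟨(a,b,i,j), h1⟩ : GadgetVert G x) ≠ Sum.inr ⟨(a,b,i',j'), h2⟩ := by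
  intro hcon
  simp only [Sum.inr.injEq, Subtype.mk.injEq, Prod.mk.injEq] at hcon
  tauto

noncomputable def lbFn (G : SimpleGraph V) (x : Sym2 V → ℕ) (v : V) :
    GadgetVert G x → ℝ≥0∞
  | Sum.inl w => (G.edist w v : ℝ≥0∞)
  | Sum.inr ⟨(a,b,_,_),_⟩ => 1/2 + min ((G.edist a v : ℝ≥0∞)) ((G.edist b v : ℝ≥0∞))

lemma edist_cast_le {v a b : V} (hadj : G.Adj a b) :
    (G.edist a v : ℝ≥0∞) ≤ 1 + (G.edist b v : ℝ≥0∞) := by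
  have h1 : G.edist a v ≤ 1 + G.edist b v := by
    refine le_trans (G.edist_triangle (v := b)) (add_le_add_left ?_ _)
    simpa using SimpleGraph.edist_le hadj.toWalk
  calc (G.edist a v : ℝ≥0∞) ≤ ((1 + G.edist b v : ℕ∞) : ℝ≥0∞) := ENat.toENNReal_mono h1
  _ = 1 + (G.edist b v : ℝ≥0∞) := by push_cast; ring

lemma min_bound {p q z : ℝ≥0∞} (h1 : z ≤ 1 + p) (h2 : z ≤ 1 + q) : z ≤ 1 + min p q := by
  rcases min_cases p q with ⟨hm, -⟩ | ⟨hm, -⟩ <;> rw [hm] <;> assumption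

lemma lbFn_step {v : V} {s y : GadgetVert G x} (h : (gadgetGraph G x).Adj s y) :
    lbFn G x v s ≤ wt G x s y + lbFn G x v y := by
  rw [gadgetGraph, SimpleGraph.fromRel_adj] at h
  obtain ⟨hne, h⟩ := h
  match s, y with
  | Sum.inl w, Sum.inl w' => rcases h with h | h <;> exact h.elim
  | Sum.inl w, Sum.inr ⟨(a,b,i,j), hp⟩ =>
    have hrel : (w = a ∧ i = 0 ∧ j = 0) ∨ (w = b ∧ i = x s(a, b) - 1 ∧ j = 5) := by
      rcases h with h | h
      · exact h
      · exact h.elim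
    show (G.edist w v : ℝ≥0∞) ≤ 1/2 + (1/2 + min _ _)
    rw [← add_assoc, ENNReal.add_halves]
    have hab : G.Adj a b := hp.2.1
    rcases hrel with ⟨hw, -⟩ | ⟨hw, -⟩ <;> subst hw
    · exact min_bound le_add_self (edist_cast_le hab)
    · exact min_bound (edist_cast_le hab.symm) le_add_self
  | Sum.inr ⟨(a,b,i,j), hp⟩, Sum.inl w =>
    have hrel : (w = a ∧ i = 0 ∧ j = 0) ∨ (w = b ∧ i = x s(a, b) - 1 ∧ j = 5) := by
      rcases h with h | h
      · exact h.elim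
      · exact h
    show 1/2 + min _ _ ≤ 1/2 + (G.edist w v : ℝ≥0∞)
    refine add_le_add_right ?_ _
    rcases hrel with ⟨hw, -⟩ | ⟨hw, -⟩ <;> subst hw
    · exact min_le_left _ _
    · exact min_le_right _ _
  | Sum.inr ⟨(a,b,i,j), hp⟩, Sum.inr ⟨(a',b',i',j'), hp'⟩ =>
    have hab : a = a' ∧ b = b' := by
      rcases h with h | h
      · exact ⟨h.1, h.2.1⟩
      · exact ⟨h.1.symm, h.2.1.symm⟩
    obtain ⟨ha, hb⟩ := hab
    subst ha; subst hb
    show 1/2 + min _ _ ≤ 0 + (1/2 + min _ _)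
    rw [zero_add]

lemma lb_walk {v : V} : ∀ (n : ℕ) (s : GadgetVert G x)
    (p : (gadgetGraph G x).Walk s (Sum.inl v)), p.length = n → lbFn G x v s ≤ wsum p := by
  intro n
  induction n with
  | zero =>
    intro s p hp
    cases p with
    | nil => simp [lbFn, SimpleGraph.edist_self, wsum_nil]
    | cons h q => simp at hp
  | succ n ih =>
    intro s p hp
    cases p with
    | nil => simp at hp
    | cons h q =>
      rw [wsum_cons]
      exact le_trans (lbFn_step h) (add_le_add_right (ih _ q (by simpa using hp)) _)

end LCLGadgetAux

namespace LCLGadgetAux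
open LCLGadget SimpleGraph
set_option linter.unusedSectionVars false
variable {V : Type} [LinearOrder V] {G : SimpleGraph V} {x : Sym2 V → ℕ}

lemma chain_walk (a b : V) (hab : a < b) (hadj : G.Adj a b) :
    ∀ (k i : ℕ) (hk : i + (k + 1) = x s(a, b)),
    ∃ p : (gadgetGraph G x).Walk
        (Sum.inr ⟨(a, b, i, 0), ⟨hab, hadj, show i < x s(a, b) by omega⟩⟩) (Sum.inl b),
      wsum p = 1/2 := by
  intro k
  induction k with
  | zero =>
    intro i hk
    have hi : i < x s(a, b) := by omega
    have h01 : (gadgetGraph G x).Adj (Sum.inr ⟨(a,b,i,0), ⟨hab, hadj, hi⟩⟩)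
        (Sum.inr ⟨(a,b,i,1), ⟨hab, hadj, hi⟩⟩) :=
      adj_of_rel (inr_ne (Or.inr (by decide))) ⟨rfl, rfl, Or.inl ⟨rfl, by unfold AAdj; decide⟩⟩
    have h13 : (gadgetGraph G x).Adj (Sum.inr ⟨(a,b,i,1), ⟨hab, hadj, hi⟩⟩)
        (Sum.inr ⟨(a,b,i,3), ⟨hab, hadj, hi⟩⟩) :=
      adj_of_rel (inr_ne (Or.inr (by decide))) ⟨rfl, rfl, Or.inl ⟨rfl, by unfold AAdj; decide⟩⟩
    have h35 : (gadgetGraph G x).Adj (Sum.inr ⟨(a,b,i,3), ⟨hab, hadj, hi⟩⟩)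
        (Sum.inr ⟨(a,b,i,5), ⟨hab, hadj, hi⟩⟩) :=
      adj_of_rel (inr_ne (Or.inr (by decide))) ⟨rfl, rfl, Or.inl ⟨rfl, by unfold AAdj; decide⟩⟩
    have h5b : (gadgetGraph G x).Adj (Sum.inr ⟨(a,b,i,5), ⟨hab, hadj, hi⟩⟩) (Sum.inl b) :=
      adj_of_rel' (by simp) (Or.inr ⟨rfl, by omega, rfl⟩)
    refine ⟨Walk.cons h01 (Walk.cons h13 (Walk.cons h35 (Walk.cons h5b Walk.nil))), ?_⟩
    simp [wsum_cons, wsum_nil, wt]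
  | succ k ih =>
    intro i hk
    have hi : i < x s(a, b) := by omega
    have hi1 : i + 1 < x s(a, b) := by omega
    obtain ⟨p, hp⟩ := ih (i + 1) (by omega)
    have h01 : (gadgetGraph G x).Adj (Sum.inr ⟨(a,b,i,0), ⟨hab, hadj, hi⟩⟩)
        (Sum.inr ⟨(a,b,i,1), ⟨hab, hadj, hi⟩⟩) :=
      adj_of_rel (inr_ne (Or.inr (by decide))) ⟨rfl, rfl, Or.inl ⟨rfl, by unfold AAdj; decide⟩⟩
    have h13 : (gadgetGraph G x).Adj (Sum.inr ⟨(a,b,i,1), ⟨hab, hadj, hi⟩⟩)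
        (Sum.inr ⟨(a,b,i,3), ⟨hab, hadj, hi⟩⟩) :=
      adj_of_rel (inr_ne (Or.inr (by decide))) ⟨rfl, rfl, Or.inl ⟨rfl, by unfold AAdj; decide⟩⟩
    have h35 : (gadgetGraph G x).Adj (Sum.inr ⟨(a,b,i,3), ⟨hab, hadj, hi⟩⟩)
        (Sum.inr ⟨(a,b,i,5), ⟨hab, hadj, hi⟩⟩) :=
      adj_of_rel (inr_ne (Or.inr (by decide))) ⟨rfl, rfl, Or.inl ⟨rfl, by unfold AAdj; decide⟩⟩
    have h50 : (gadgetGraph G x).Adj (Sum.inr ⟨(a,b,i,5), ⟨hab, hadj, hi⟩⟩)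
        (Sum.inr ⟨(a,b,i+1,0), ⟨hab, hadj, hi1⟩⟩) :=
      adj_of_rel (inr_ne (Or.inl (by omega))) ⟨rfl, rfl, Or.inr ⟨rfl, rfl, rfl⟩⟩
    refine ⟨Walk.cons h01 (Walk.cons h13 (Walk.cons h35 (Walk.cons h50 p))), ?_⟩
    simp [wsum_cons, wt, hp]

lemma edge_walk_lt (a b : V) (hab : a < b) (hadj : G.Adj a b) (hx : 0 < x s(a, b)) :
    ∃ p : (gadgetGraph G x).Walk (Sum.inl a) (Sum.inl b), wsum p = 1 := by
  obtain ⟨p, hp⟩ := chain_walk (G := G) (x := x) a b hab hadj (x s(a, b) - 1) 0 (by omega)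
  have h0 : (gadgetGraph G x).Adj (Sum.inl a)
      (Sum.inr ⟨(a, b, 0, 0), ⟨hab, hadj, show 0 < x s(a, b) by omega⟩⟩) :=
    adj_of_rel (by simp) (Or.inl ⟨rfl, rfl, rfl⟩)
  exact ⟨Walk.cons h0 p, by rw [wsum_cons, hp]; exact ENNReal.add_halves 1⟩

lemma edge_walk (a b : V) (hadj : G.Adj a b) (hx : 0 < x s(a, b)) :
    ∃ p : (gadgetGraph G x).Walk (Sum.inl a) (Sum.inl b), wsum p = 1 := by
  rcases lt_trichotomy a b with h | h | h
  · exact edge_walk_lt a b h hadj hx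
  · exact absurd h hadj.ne
  · obtain ⟨p, hp⟩ := edge_walk_lt b a h hadj.symm (by rwa [Sym2.eq_swap])
    exact ⟨p.reverse, by rw [wsum_reverse, hp]⟩

lemma ub_walk (hxpos : PosLabels G x) {v : V} :
    ∀ (w : V) (W : G.Walk w v),
    ∃ p : (gadgetGraph G x).Walk (Sum.inl w) (Sum.inl v), wsum p ≤ (W.length : ℝ≥0∞) := by
  intro w W
  induction W with
  | nil => exact ⟨Walk.nil, by simp [wsum_nil]⟩
  | @cons w w' _ h W' ih =>
    obtain ⟨p2, hp2⟩ := ih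
    obtain ⟨p1, hp1⟩ := edge_walk w w' h (hxpos _ (G.mem_edgeSet.mpr h))
    refine ⟨p1.append p2, ?_⟩
    rw [wsum_append, hp1, Walk.length_cons]
    calc 1 + wsum p2 ≤ 1 + (W'.length : ℝ≥0∞) := add_le_add_right hp2 _
      _ = ((W'.length + 1 : ℕ) : ℝ≥0∞) := by push_cast; ring

end LCLGadgetAux

namespace LCLGadgetThms
open LCLGadget

variable {V : Type} [LinearOrder V]

theorem stmt11 (G : SimpleGraph V) (x : Sym2 V → ℕ)
    (hreg : ThreeRegular G) (hxpos : PosLabels G x)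
    (u v : V) (d : ℕ) (hd : G.edist u v = d) :
    gdist G x (Sum.inl u) (Sum.inl v) = (d : ℝ≥0∞) := by
  obtain ⟨W, hW⟩ := SimpleGraph.exists_walk_of_edist_eq_coe hd
  refine le_antisymm ?_ ?_
  · obtain ⟨p, hp⟩ := LCLGadgetAux.ub_walk hxpos u W
    rw [hW] at hp
    exact le_trans (LCLGadgetAux.gdist_le p) hp
  · refine LCLGadgetAux.le_gdist fun p => ?_
    have h1 := LCLGadgetAux.lb_walk p.length (Sum.inl u) p rfl
    simp only [LCLGadgetAux.lbFn] at h1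
    rwa [hd, ENat.toENNReal_coe] at h1

end LCLGadgetThms
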